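/- Let μ be a weight measure over a finite alphabet Σ with values in a linearly ordered cancellative commutative monoid A. Every word w ∈ Σ* satisfies |P_μ(w)| = 1 if and only if μ is both gapfree and injective on Σ. (In that case the unique element of P_μ(w) is called the μ-prefix normal form of w.) -/

import Mathlib

/-- The weight of a word: the product of the weights of its letters. -/
def weight {α A : Type*} [CommMonoid A] [LinearOrder A] [IsOrderedCancelMonoid A] (μ : α → A) (w : List α) : A :=
  (w.map μ).prod

/-- The factor-weight function: `factorWeight μ w i` is the maximum weight of a
length-`i` factor (contiguous subword) of `w`. -/
def factorWeight {α A : Type*} [CommMonoid A] [LinearOrder A] [IsOrderedCancelMonoid A] (μ : α → A)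
    (w : List α) (i : ℕ) : A :=
  ((List.range (w.length + 1 - i)).map fun j => weight μ ((w.drop j).take i)).foldr max 1

/-- A word is `μ`-prefix normal if its factor-weight function agrees with its
prefix-weight function. -/
def PrefixNormal {α A : Type*} [CommMonoid A] [LinearOrder A] [IsOrderedCancelMonoid A] (μ : α → A)
    (w : List α) : Prop :=
  ∀ i ≤ w.length, factorWeight μ w i = weight μ (w.take i)

/-- A weight measure is gapfree if for every word `w` and every `1 ≤ i ≤ |w|` there is a
letter `a` with `f_{w,μ}(i) = f_{w,μ}(i-1) * μ a`. -/
def Gapfree {α A : Type*} [CommMonoid A] [LinearOrder A] [IsOrderedCancelMonoid A] (μ : α → A) : Prop :=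
  ∀ w : List α, ∀ i, 1 ≤ i → i ≤ w.length →
    ∃ a : α, factorWeight μ w i = factorWeight μ w (i - 1) * μ a

/-- `pnClass μ w` is the set `P_μ(w)` of words that are factor-weight equivalent to `w`
and `μ`-prefix normal. -/
def pnClass {α A : Type*} [CommMonoid A] [LinearOrder A] [IsOrderedCancelMonoid A] (μ : α → A)
    (w : List α) : Set (List α) :=
  {v | (∀ i, factorWeight μ v i = factorWeight μ w i) ∧ PrefixNormal μ v}

section Aux

variable {α A : Type*} [CommMonoid A] [LinearOrder A] [IsOrderedCancelMonoid A] {μ : α → A}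

lemma weight_append (u v : List α) : weight μ (u ++ v) = weight μ u * weight μ v := by
  simp [weight]

lemma weight_nil : weight μ ([] : List α) = 1 := rfl

lemma one_le_weight (hμ : ∀ a : α, 1 < μ a) (u : List α) : 1 ≤ weight μ u := by
  induction u with
  | nil => exact le_refl 1
  | cons a t ih =>
    have : weight μ (a :: t) = μ a * weight μ t := by simp [weight]
    rw [this]
    exact one_le_mul ((hμ a).le) ih

lemma one_lt_weight (hμ : ∀ a : α, 1 < μ a) {u : List α} (h : u ≠ []) : 1 < weight μ u := by
  cases u with
  | nil => exact absurd rfl h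
  | cons a t =>
    have : weight μ (a :: t) = μ a * weight μ t := by simp [weight]
    rw [this]
    exact lt_of_lt_of_le (hμ a) (le_mul_of_one_le_right' (one_le_weight hμ t))

lemma one_le_foldr_max (l : List A) : 1 ≤ l.foldr max 1 := by
  induction l with
  | nil => exact le_refl 1
  | cons a t ih => exact le_max_of_le_right ih

lemma le_foldr_max {l : List A} {x : A} (h : x ∈ l) : x ≤ l.foldr max 1 := by
  induction l with
  | nil => simp at h
  | cons a t ih =>
    rcases List.mem_cons.mp h with rfl | h
    · exact le_max_left _ _
    · exact le_max_of_le_right (ih h)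

lemma foldr_max_le {l : List A} {x : A} (h1 : 1 ≤ x) (h2 : ∀ y ∈ l, y ≤ x) :
    l.foldr max 1 ≤ x := by
  induction l with
  | nil => exact h1
  | cons a t ih =>
    exact max_le (h2 a (List.mem_cons_self)) (ih fun y hy => h2 y (List.mem_cons_of_mem _ hy))

lemma foldr_max_mem (l : List A) : l.foldr max 1 ∈ l ∨ l.foldr max 1 = 1 := by
  induction l with
  | nil => exact Or.inr rfl
  | cons a t ih =>
    have : (a :: t).foldr max 1 = max a (t.foldr max 1) := rfl
    rw [this]
    rcases max_choice a (t.foldr max 1) with h | h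
    · rw [h]; exact Or.inl (List.mem_cons_self)
    · rw [h]
      rcases ih with h' | h'
      · exact Or.inl (List.mem_cons_of_mem _ h')
      · exact Or.inr h'

lemma one_le_fw (w : List α) (i : ℕ) : 1 ≤ factorWeight μ w i :=
  one_le_foldr_max _

lemma fw_zero (hμ : ∀ a : α, 1 < μ a) (w : List α) : factorWeight μ w 0 = 1 := by
  refine le_antisymm (foldr_max_le (le_refl 1) ?_) (one_le_fw w 0)
  intro y hy
  obtain ⟨j, _, rfl⟩ := List.mem_map.mp hy
  simp [weight]

lemma fw_of_gt {w : List α} {i : ℕ} (h : w.length < i) : factorWeight μ w i = 1 := by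
  have : w.length + 1 - i = 0 := by omega
  simp [factorWeight, this]

lemma fw_factor_le {w : List α} {i j : ℕ} (h : j + i ≤ w.length) :
    weight μ ((w.drop j).take i) ≤ factorWeight μ w i := by
  apply le_foldr_max
  exact List.mem_map.mpr ⟨j, List.mem_range.mpr (by omega), rfl⟩

lemma fw_prefix_le {w : List α} {i : ℕ} (h : i ≤ w.length) :
    weight μ (w.take i) ≤ factorWeight μ w i := by
  have := fw_factor_le (μ := μ) (w := w) (i := i) (j := 0) (by omega)
  simpa using this

lemma fw_le {w : List α} {i : ℕ} {x : A} (h1 : 1 ≤ x)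
    (h2 : ∀ j, j + i ≤ w.length → weight μ ((w.drop j).take i) ≤ x) :
    factorWeight μ w i ≤ x := by
  apply foldr_max_le h1
  intro y hy
  obtain ⟨j, hj, rfl⟩ := List.mem_map.mp hy
  exact h2 j (by have := List.mem_range.mp hj; omega)

lemma fw_exists (hμ : ∀ a : α, 1 < μ a) {w : List α} {i : ℕ} (h1 : 1 ≤ i) (h2 : i ≤ w.length) :
    ∃ j, j + i ≤ w.length ∧ factorWeight μ w i = weight μ ((w.drop j).take i) := by
  rcases foldr_max_mem ((List.range (w.length + 1 - i)).map
      fun j => weight μ ((w.drop j).take i)) with h | h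
  · obtain ⟨j, hj, hje⟩ := List.mem_map.mp h
    exact ⟨j, by have := List.mem_range.mp hj; omega, hje.symm⟩
  · exfalso
    have hne : w.take i ≠ [] := by
      intro hc
      have h0 : (w.take i).length = 0 := by rw [hc]; rfl
      rw [List.length_take] at h0
      omega
    have h3 : 1 < weight μ (w.take i) := one_lt_weight hμ hne
    have h4 : weight μ (w.take i) ≤ factorWeight μ w i := fw_prefix_le h2
    have h' : factorWeight μ w i = 1 := h
    rw [h'] at h4
    exact absurd (lt_of_lt_of_le h3 h4) (lt_irrefl 1)

lemma fw_subadd (hμ : ∀ a : α, 1 < μ a) (w : List α) (i j : ℕ) :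
    factorWeight μ w (i + j) ≤ factorWeight μ w i * factorWeight μ w j := by
  by_cases h : 1 ≤ i + j ∧ i + j ≤ w.length
  · obtain ⟨j0, hj0, heq⟩ := fw_exists hμ h.1 h.2
    rw [heq, List.take_add, weight_append]
    have e1 : weight μ ((w.drop j0).take i) ≤ factorWeight μ w i :=
      fw_factor_le (by omega)
    have e2 : weight μ (((w.drop j0).drop i).take j) ≤ factorWeight μ w j := by
      rw [List.drop_drop]
      exact fw_factor_le (by omega)
    exact mul_le_mul' e1 e2
  · push_neg at h
    rcases Nat.lt_or_ge (i + j) 1 with h' | h'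
    · have hi : i = 0 := by omega
      have hj : j = 0 := by omega
      subst hi; subst hj
      rw [fw_zero hμ]
      simp
    · have : w.length < i + j := h h'
      rw [fw_of_gt this]
      exact one_le_mul (one_le_fw w i) (one_le_fw w j)

lemma length_eq_of_fw_eq (hμ : ∀ a : α, 1 < μ a) {v w : List α}
    (h : ∀ i, factorWeight μ v i = factorWeight μ w i) : v.length = w.length := by
  by_contra hne
  rcases Nat.lt_or_ge v.length w.length with hl | hl
  · have h1 : factorWeight μ v w.length = 1 := fw_of_gt hl
    have h2 : (1 : A) < weight μ (w.take w.length) :=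
      one_lt_weight hμ (by
        intro hc
        rw [List.take_length] at hc
        rw [hc] at hl
        simp at hl)
    have h3 := fw_prefix_le (μ := μ) (w := w) (le_refl w.length)
    rw [← h w.length, h1] at h3
    exact absurd (lt_of_lt_of_le h2 h3) (lt_irrefl 1)
  · have hl' : w.length < v.length := by omega
    have h1 : factorWeight μ w v.length = 1 := fw_of_gt hl'
    have h2 : (1 : A) < weight μ (v.take v.length) :=
      one_lt_weight hμ (by
        intro hc
        rw [List.take_length] at hc
        rw [hc] at hl'
        simp at hl')
    have h3 := fw_prefix_le (μ := μ) (w := v) (le_refl v.length)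
    rw [h v.length, h1] at h3
    exact absurd (lt_of_lt_of_le h2 h3) (lt_irrefl 1)

lemma weight_take_succ {u : List α} {k : ℕ} (h : k < u.length) :
    weight μ (u.take (k + 1)) = weight μ (u.take k) * μ (u.get ⟨k, h⟩) := by
  have := List.take_concat_get h
  rw [← this, List.concat_eq_append, weight_append]
  simp [weight]

/-- Existence of the prefix normal form, given gapfreeness. -/
lemma pn_exists (hμ : ∀ a : α, 1 < μ a) (hgf : Gapfree μ) (w : List α) :
    ∃ v, v ∈ pnClass μ w := by
  -- build v with weight (v.take k) = factorWeight μ w k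
  have key : ∀ n, n ≤ w.length →
      ∃ v : List α, v.length = n ∧ ∀ k ≤ n, weight μ (v.take k) = factorWeight μ w k := by
    intro n
    induction n with
    | zero =>
      intro _
      refine ⟨[], rfl, ?_⟩
      intro k hk
      interval_cases k
      simp [weight_nil, fw_zero hμ]
    | succ n ih =>
      intro hn
      obtain ⟨v, hvl, hvw⟩ := ih (by omega)
      obtain ⟨a, ha⟩ := hgf w (n + 1) (by omega) hn
      refine ⟨v ++ [a], by simp [hvl], ?_⟩
      intro k hk
      rcases Nat.lt_or_ge k (n + 1) with h | h
      · rw [List.take_append_of_le_length (by omega)]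
        exact hvw k (by omega)
      · have hk1 : k = n + 1 := by omega
        subst hk1
        have : (v ++ [a]).take (n + 1) = v ++ [a] := by
          apply List.take_of_length_le; simp [hvl]
        have hvv : weight μ v = factorWeight μ w n := by
          have h5 := hvw n (le_refl n)
          rwa [List.take_of_length_le (by omega)] at h5
        rw [this, weight_append, hvv]
        have ha' : factorWeight μ w (n + 1) = factorWeight μ w n * μ a := by simpa using ha
        rw [ha']
        simp [weight]
  obtain ⟨v, hvl, hvw⟩ := key w.length (le_refl _)
  have hfw : ∀ i, factorWeight μ v i = factorWeight μ w i := by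
    intro i
    rcases Nat.lt_or_ge w.length i with h | h
    · rw [fw_of_gt (by omega), fw_of_gt h]
    · -- i ≤ w.length = v.length
      refine le_antisymm ?_ ?_
      · apply fw_le (one_le_fw w i)
        intro j hj
        rw [hvl] at hj
        -- weight of factor starting at j
        have hsplit : weight μ (v.take (j + i)) =
            weight μ (v.take j) * weight μ ((v.drop j).take i) := by
          rw [List.take_add, weight_append]
        have h1 : weight μ (v.take (j + i)) = factorWeight μ w (j + i) := hvw _ (by omega)
        have h2 : weight μ (v.take j) = factorWeight μ w j := hvw _ (by omega)
        have hsub := fw_subadd hμ w j i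
        rw [← h1, hsplit, h2] at hsub
        exact le_of_mul_le_mul_left' hsub
      · calc factorWeight μ w i = weight μ (v.take i) := (hvw i h).symm
          _ ≤ factorWeight μ v i := fw_prefix_le (by omega)
  refine ⟨v, hfw, ?_⟩
  intro i hi
  rw [hfw i, hvw i (by omega)]

/-- Uniqueness of the prefix normal form, given injectivity. -/
lemma pn_unique (hμ : ∀ a : α, 1 < μ a) (hinj : Function.Injective μ) {w v1 v2 : List α}
    (h1 : v1 ∈ pnClass μ w) (h2 : v2 ∈ pnClass μ w) : v1 = v2 := by
  obtain ⟨hf1, hp1⟩ := h1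
  obtain ⟨hf2, hp2⟩ := h2
  have hlen : v1.length = v2.length := by
    have := length_eq_of_fw_eq hμ (fun i => (hf1 i).trans (hf2 i).symm)
    exact this
  have hw : ∀ i ≤ v1.length, weight μ (v1.take i) = weight μ (v2.take i) := by
    intro i hi
    rw [← hp1 i hi, ← hp2 i (by omega), hf1, hf2]
  apply List.ext_get hlen
  intro k hk1 hk2
  induction k using Nat.strong_induction_on with
  | _ k ihk =>
    have e1 := weight_take_succ (μ := μ) hk1
    have e2 := weight_take_succ (μ := μ) hk2
    have etake : v1.take k = v2.take k := by
      apply List.ext_get (by simp; omega)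
      intro m hm1 hm2
      have hmk : m < k := by simp at hm1; omega
      have := ihk m hmk (by omega) (by omega)
      simpa using this
    have ew : weight μ (v1.take (k+1)) = weight μ (v2.take (k+1)) := hw (k+1) (by omega)
    rw [e1, e2, etake] at ew
    exact hinj (mul_left_cancel ew)

end Aux

/-- Every word `w` satisfies `|P_μ(w)| = 1` iff `μ` is both gapfree and injective. -/
theorem forall_pnClass_unique_iff_gapfree_and_injective {α A : Type*} [Fintype α]
    [CommMonoid A] [LinearOrder A] [IsOrderedCancelMonoid A] (μ : α → A) (hμ : ∀ a : α, 1 < μ a) :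
    (∀ w : List α, ∃! v : List α, v ∈ pnClass μ w) ↔
      (Gapfree μ ∧ Function.Injective μ) := by
  constructor
  · intro H
    constructor
    · -- gapfree
      intro w i hi1 hi2
      obtain ⟨v, ⟨hfv, hpv⟩, _⟩ := H w
      have hlen : v.length = w.length := length_eq_of_fw_eq hμ hfv
      have hi1' : i - 1 < v.length := by omega
      refine ⟨v.get ⟨i - 1, hi1'⟩, ?_⟩
      have ht : weight μ (v.take ((i - 1) + 1)) =
          weight μ (v.take (i - 1)) * μ (v.get ⟨i - 1, hi1'⟩) := weight_take_succ hi1'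
      have e : (i - 1) + 1 = i := by omega
      rw [← hfv i, ← hfv (i - 1), hpv i (by omega), hpv (i - 1) (by omega)]
      have e2' : weight μ (v.take i) = weight μ (v.take ((i - 1) + 1)) := by rw [e]
      rw [e2', ht]
    · -- injective
      intro a b hab
      have hmem : ∀ c : α, μ c = μ a → [c] ∈ pnClass μ [a] := by
        intro c hc
        constructor
        · intro i
          match i with
          | 0 => rfl
          | 1 =>
            show factorWeight μ [c] 1 = factorWeight μ [a] 1
            simp [factorWeight, weight, hc]
          | (n+2) =>
            rw [fw_of_gt (by simp), fw_of_gt (by simp)]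
        · intro i hi
          simp at hi
          interval_cases i
          · exact fw_zero hμ [c]
          · show factorWeight μ [c] 1 = weight μ ([c].take 1)
            simp [factorWeight, weight, List.range_succ]
            exact (hμ c).le
      obtain ⟨v, _, hv⟩ := H [a]
      have e1 : [b] = v := hv [b] (hmem b hab.symm)
      have e2 : [a] = v := hv [a] (hmem a rfl)
      have : [a] = [b] := e2.trans e1.symm
      simpa using this
  · rintro ⟨hgf, hinj⟩ w
    obtain ⟨v, hv⟩ := pn_exists hμ hgf w
    exact ⟨v, hv, fun v' hv' => pn_unique hμ hinj hv' hv⟩
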